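/- Let G be a connected finite simple graph with more than 2 vertices which is 1-well-covered, and let α = α(G). Then for every integer k with 1 ≤ k < α, we have 2(α − k)·s_k ≤ (k+1)·s_{k+1}. -/

import Mathlib

open Finset
open scoped Classical

variable {V : Type*}

/-- `S` is an independent set in `G`: its vertices are pairwise non-adjacent. -/
def IsIndepSet (G : SimpleGraph V) (S : Finset V) : Prop :=
  ∀ ⦃u⦄, u ∈ S → ∀ ⦃v⦄, v ∈ S → ¬ G.Adj u v

/-- The neighborhood `N(S)`: all vertices having at least one neighbor in `S`. -/
noncomputable def neigh [Fintype V] (G : SimpleGraph V) (S : Finset V) : Finset V :=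
  Finset.univ.filter fun v => ∃ u ∈ S, G.Adj u v

/-- The independence number `α(G)`: the maximum size of an independent set. -/
noncomputable def indepNum [Fintype V] (G : SimpleGraph V) : ℕ :=
  (Finset.univ.filter fun S : Finset V => IsIndepSet G S).sup Finset.card

/-- `s_k`: the number of independent sets of size `k` in `G`. -/
noncomputable def indepCount [Fintype V] (G : SimpleGraph V) (k : ℕ) : ℕ :=
  (Finset.univ.filter fun S : Finset V => IsIndepSet G S ∧ S.card = k).card

/-- A maximal independent set (not properly contained in another independent set). -/
def IsMaximalIndepSet (G : SimpleGraph V) (S : Finset V) : Prop :=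
  IsIndepSet G S ∧ ∀ T : Finset V, IsIndepSet G T → S ⊆ T → S = T

/-- `G` is well-covered: all maximal independent sets have the same cardinality. -/
def IsWellCovered (G : SimpleGraph V) : Prop :=
  ∀ S T : Finset V, IsMaximalIndepSet G S → IsMaximalIndepSet G T → S.card = T.card

/-- `G` is 1-well-covered: it is well-covered, has at least two vertices, and
deleting any vertex leaves a well-covered graph. -/
def IsOneWellCovered [Fintype V] (G : SimpleGraph V) : Prop :=
  IsWellCovered G ∧ 2 ≤ Fintype.card V ∧
    ∀ v : V, IsWellCovered (G.induce ({v}ᶜ : Set V))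

/-- The corona `H ∘ K₂`: for each vertex `v` of `H`, two new vertices
(`(v, false)` and `(v, true)`) adjacent to each other and to `v` are added. -/
def corona2 (H : SimpleGraph V) : SimpleGraph (V ⊕ V × Bool) :=
  SimpleGraph.fromRel fun x y =>
    match x, y with
    | Sum.inl u, Sum.inl v => H.Adj u v
    | Sum.inl u, Sum.inr (v, _) => u = v
    | Sum.inr (u, _), Sum.inr (v, _) => u = v
    | _, _ => False

-- auxiliary lemmas
lemma indep_subset {G : SimpleGraph V} {S T : Finset V} (h : IsIndepSet G T) (hST : S ⊆ T) :
    IsIndepSet G S := fun u hu w hw => h (hST hu) (hST hw)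

lemma indep_card_le [Fintype V] {G : SimpleGraph V} {S : Finset V} (h : IsIndepSet G S) :
    S.card ≤ indepNum G :=
  Finset.le_sup (by simp [h])

lemma exists_maximal_superset [Fintype V] {G : SimpleGraph V} {A : Finset V}
    (hA : IsIndepSet G A) : ∃ S, A ⊆ S ∧ IsMaximalIndepSet G S := by
  obtain ⟨S, hS, hmax⟩ := Finset.exists_max_image
    (Finset.univ.filter fun S : Finset V => IsIndepSet G S ∧ A ⊆ S) Finset.card
    ⟨A, by simp [hA]⟩
  simp only [Finset.mem_filter, Finset.mem_univ, true_and] at hS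
  refine ⟨S, hS.2, hS.1, fun T hT hST => ?_⟩
  exact Finset.eq_of_subset_of_card_le hST
    (hmax T (by simp [hT, hS.2.trans hST]))

lemma exists_maximal_avoiding [Fintype V] {G : SimpleGraph V} {A : Finset V} {v : V}
    (hA : IsIndepSet G A) (hv : v ∉ A) :
    ∃ T, A ⊆ T ∧ IsIndepSet G T ∧ v ∉ T ∧
      ∀ U : Finset V, IsIndepSet G U → v ∉ U → T ⊆ U → T = U := by
  obtain ⟨T, hT, hmax⟩ := Finset.exists_max_image
    (Finset.univ.filter fun S : Finset V => IsIndepSet G S ∧ A ⊆ S ∧ v ∉ S) Finset.card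
    ⟨A, by simp [hA, hv]⟩
  simp only [Finset.mem_filter, Finset.mem_univ, true_and] at hT
  refine ⟨T, hT.2.1, hT.1, hT.2.2, fun U hU hvU hTU => ?_⟩
  exact Finset.eq_of_subset_of_card_le hTU
    (hmax U (by simp [hU, hT.2.1.trans hTU, hvU]))

lemma maximal_card_eq [Fintype V] {G : SimpleGraph V} (hwc : IsWellCovered G)
    {S : Finset V} (hS : IsMaximalIndepSet G S) : S.card = indepNum G := by
  -- first get a maximum independent set
  obtain ⟨M, hM, hMcard⟩ : ∃ M : Finset V, IsIndepSet G M ∧ M.card = indepNum G := by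
    obtain ⟨M, hM, hMc⟩ := Finset.exists_mem_eq_sup
      (Finset.univ.filter fun S : Finset V => IsIndepSet G S) ⟨∅, by rw [Finset.mem_filter]; exact ⟨Finset.mem_univ _, fun u hu => absurd hu (Finset.notMem_empty u)⟩⟩
      Finset.card
    simp only [Finset.mem_filter, Finset.mem_univ, true_and] at hM
    exact ⟨M, hM, hMc.symm⟩
  have hMmax : IsMaximalIndepSet G M := by
    refine ⟨hM, fun T hT hMT => ?_⟩
    exact Finset.eq_of_subset_of_card_le hMT (by rw [hMcard]; exact indep_card_le hT)
  rw [hwc S M hS hMmax, hMcard]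

lemma exists_neighbor [Fintype V] {G : SimpleGraph V} (hconn : G.Connected)
    (hcard : 2 ≤ Fintype.card V) (v : V) : ∃ u, G.Adj v u := by
  obtain ⟨u, hu⟩ := Fintype.exists_ne_of_one_lt_card (by omega) v
  obtain ⟨w⟩ := hconn.preconnected v u
  cases w with
  | nil => exact absurd rfl hu
  | cons h _ => exact ⟨_, h⟩

lemma subtype_maximal [Fintype V] {G : SimpleGraph V} {v : V} {T : Finset V}
    (hT : IsIndepSet G T) (hvT : v ∉ T)
    (hmax : ∀ U : Finset V, IsIndepSet G U → v ∉ U → T ⊆ U → T = U) :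
    IsMaximalIndepSet (G.induce ({v}ᶜ : Set V))
      (T.subtype (· ∈ ({v}ᶜ : Set V))) := by
  constructor
  · intro a ha b hb hadj
    rw [Finset.mem_subtype] at ha hb
    exact hT ha hb hadj
  · intro U' hU' hsub
    set U : Finset V := U'.image (Subtype.val) with hUdef
    have hvU : v ∉ U := by
      simp only [hUdef, Finset.mem_image]
      rintro ⟨⟨x, hx⟩, _, h⟩
      exact hx (show x ∈ ({v} : Set V) from h)
    have hUind : IsIndepSet G U := by
      intro a ha b hb hadj
      simp only [hUdef, Finset.mem_image] at ha hb
      obtain ⟨a', ha', rfl⟩ := ha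
      obtain ⟨b', hb', rfl⟩ := hb
      exact hU' ha' hb' hadj
    have hTU : T ⊆ U := by
      intro a ha
      have hav : a ∈ ({v}ᶜ : Set V) := by
        simp only [Set.mem_compl_iff, Set.mem_singleton_iff]
        rintro rfl; exact hvT ha
      have : (⟨a, hav⟩ : ({v}ᶜ : Set V)) ∈ U' := hsub (by rwa [Finset.mem_subtype])
      exact Finset.mem_image.2 ⟨⟨a, hav⟩, this, rfl⟩
    have hTeq : T = U := hmax U hUind hvU hTU
    apply Finset.Subset.antisymm hsub
    intro x hx
    rw [Finset.mem_subtype, hTeq]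
    exact Finset.mem_image.2 ⟨x, hx, rfl⟩

lemma subtype_card {v : V} {T : Finset V} (hvT : v ∉ T) :
    (T.subtype (· ∈ ({v}ᶜ : Set V))).card = T.card := by
  rw [Finset.card_subtype, Finset.filter_true_of_mem]
  intro x hx
  simp only [Set.mem_compl_iff, Set.mem_singleton_iff]
  rintro rfl; exact hvT hx

/-- In a connected 1-well-covered graph with at least 2 vertices, any independent set
avoiding `v` extends to an independent set of full size `indepNum G` avoiding `v`. -/
lemma extend_avoiding [Fintype V] {G : SimpleGraph V} (hconn : G.Connected)
    (h1wc : IsOneWellCovered G) {A : Finset V} {v : V}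
    (hA : IsIndepSet G A) (hv : v ∉ A) :
    ∃ T, A ⊆ T ∧ IsIndepSet G T ∧ v ∉ T ∧ T.card = indepNum G := by
  obtain ⟨u, huv⟩ := exists_neighbor hconn h1wc.2.1 v
  -- a maximal independent set containing u, hence avoiding v
  have hu_ind : IsIndepSet G ({u} : Finset V) := by
    intro a ha b hb
    simp only [Finset.mem_singleton] at ha hb
    subst ha; subst hb; exact fun h => G.irrefl h
  obtain ⟨S, huS, hSmax⟩ := exists_maximal_superset hu_ind
  have hvS : v ∉ S := fun hvS =>
    hSmax.1 (huS (Finset.mem_singleton_self u)) hvS huv.symm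
  have hScard : S.card = indepNum G := maximal_card_eq h1wc.1 hSmax
  -- the v-avoiding maximal extension of A
  obtain ⟨T, hAT, hTind, hvT, hTmax⟩ := exists_maximal_avoiding hA hv
  -- S is also v-avoiding maximal
  have hSmax' : ∀ U : Finset V, IsIndepSet G U → v ∉ U → S ⊆ U → S = U :=
    fun U hU _ hSU => hSmax.2 U hU hSU
  -- compare cardinalities via well-coveredness of G - v
  have hcards := h1wc.2.2 v _ _ (subtype_maximal hTind hvT hTmax)
    (subtype_maximal hSmax.1 hvS hSmax')
  rw [subtype_card hvT, subtype_card hvS, hScard] at hcards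
  exact ⟨T, hAT, hTind, hvT, hcards⟩

/-- Every independent set of size `k < α` in a connected 1-well-covered graph has at
least `2(α-k)` extension vertices. -/
lemma two_mul_le_ext_card [Fintype V] {G : SimpleGraph V} (hconn : G.Connected)
    (h1wc : IsOneWellCovered G) {A : Finset V} (hA : IsIndepSet G A) :
    2 * (indepNum G - A.card) ≤
      (Finset.univ.filter fun w => w ∉ A ∧ IsIndepSet G (insert w A)).card := by
  set E := Finset.univ.filter fun w => w ∉ A ∧ IsIndepSet G (insert w A) with hEdef
  obtain ⟨S, hAS, hSmax⟩ := exists_maximal_superset hA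
  have hScard : S.card = indepNum G := maximal_card_eq h1wc.1 hSmax
  set B := S \ A with hBdef
  have hBcard : B.card = indepNum G - A.card := by
    rw [hBdef, Finset.card_sdiff_of_subset hAS, hScard]
  have hBE : B ⊆ E := by
    intro w hw
    rw [hBdef, Finset.mem_sdiff] at hw
    rw [hEdef, Finset.mem_filter]
    refine ⟨Finset.mem_univ _, hw.2, indep_subset hSmax.1 ?_⟩
    exact Finset.insert_subset hw.1 hAS
  -- for each v in B, find a "partner" vertex
  have hkey : ∀ v ∈ B, ∃ w, w ∈ E ∧ w ∉ S ∧ G.Adj w v ∧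
      ∀ u ∈ S.erase v, ¬ G.Adj w u := by
    intro v hv
    rw [hBdef, Finset.mem_sdiff] at hv
    have hvA : v ∉ A := hv.2
    have hX : IsIndepSet G (S.erase v) := indep_subset hSmax.1 (Finset.erase_subset _ _)
    have hAX : A ⊆ S.erase v := fun a ha =>
      Finset.mem_erase.2 ⟨fun h => hvA (h ▸ ha), hAS ha⟩
    obtain ⟨T, hXT, hTind, hvT, hTcard⟩ :=
      extend_avoiding hconn h1wc hX (Finset.notMem_erase v S)
    have hXcard : (S.erase v).card = indepNum G - 1 := by
      rw [Finset.card_erase_of_mem hv.1, hScard]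
    have hone : (T \ S.erase v).card = 1 := by
      rw [Finset.card_sdiff_of_subset hXT, hTcard, hXcard]
      have h1 : 1 ≤ indepNum G := by
        calc 1 = ({v} : Finset V).card := (Finset.card_singleton v).symm
        _ ≤ indepNum G := indep_card_le (by
            intro a ha b hb
            simp only [Finset.mem_singleton] at ha hb
            subst ha; subst hb; exact fun h => G.irrefl h)
      omega
    obtain ⟨w, hw⟩ := Finset.card_eq_one.1 hone
    have hwT : w ∈ T ∧ w ∉ S.erase v := by
      have : w ∈ T \ S.erase v := hw ▸ Finset.mem_singleton_self w
      exact Finset.mem_sdiff.1 this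
    have hwv : w ≠ v := fun h => hvT (h ▸ hwT.1)
    have hwS : w ∉ S := fun h => hwT.2 (Finset.mem_erase.2 ⟨hwv, h⟩)
    have hwA : w ∉ A := fun h => hwT.2 (hAX h)
    have hwE : w ∈ E := by
      rw [hEdef, Finset.mem_filter]
      refine ⟨Finset.mem_univ _, hwA, indep_subset hTind ?_⟩
      exact Finset.insert_subset hwT.1 (hAX.trans hXT)
    have hnoadj : ∀ u ∈ S.erase v, ¬ G.Adj w u := by
      intro u hu
      exact hTind hwT.1 (hXT hu)
    have hadj : G.Adj w v := by
      by_contra hna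
      have : IsIndepSet G (insert w S) := by
        intro a ha b hb hab
        rcases Finset.mem_insert.1 ha with rfl | ha' <;>
          rcases Finset.mem_insert.1 hb with rfl | hb'
        · exact G.irrefl hab
        · rcases eq_or_ne b v with rfl | hbv
          · exact hna hab
          · exact hnoadj b (Finset.mem_erase.2 ⟨hbv, hb'⟩) hab
        · rcases eq_or_ne a v with rfl | hav
          · exact hna hab.symm
          · exact hnoadj a (Finset.mem_erase.2 ⟨hav, ha'⟩) hab.symm
        · exact hSmax.1 ha' hb' hab
      have hle := indep_card_le this
      rw [Finset.card_insert_of_notMem hwS, hScard] at hle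
      omega
    exact ⟨w, hwE, hwS, hadj, hnoadj⟩
  choose! f hf using hkey
  have hinj : Set.InjOn f B := by
    intro x hx y hy hxy
    by_contra hne
    have hxB : x ∈ B := Finset.mem_coe.1 hx
    have hyx : y ∈ S.erase x := by
      have hyB : y ∈ B := Finset.mem_coe.1 hy
      rw [hBdef, Finset.mem_sdiff] at hyB
      exact Finset.mem_erase.2 ⟨fun h => hne h.symm, hyB.1⟩
    have h1 : G.Adj (f y) y := (hf y (Finset.mem_coe.1 hy)).2.2.1
    have h2 : ¬ G.Adj (f x) y := (hf x hxB).2.2.2 y hyx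
    rw [hxy] at h2
    exact h2 h1
  have hWcard : (B.image f).card = B.card := Finset.card_image_of_injOn hinj
  have hWE : B.image f ⊆ E := by
    intro w hw
    obtain ⟨v, hv, rfl⟩ := Finset.mem_image.1 hw
    exact (hf v hv).1
  have hdisj : Disjoint B (B.image f) := by
    rw [Finset.disjoint_right]
    intro w hw
    obtain ⟨v, hv, rfl⟩ := Finset.mem_image.1 hw
    intro hwB
    exact (hf v hv).2.1 (Finset.sdiff_subset hwB)
  calc 2 * (indepNum G - A.card) = B.card + (B.image f).card := by
        rw [hWcard, hBcard]; ring
  _ = (B ∪ B.image f).card := (Finset.card_union_of_disjoint hdisj).symm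
  _ ≤ E.card := Finset.card_le_card (Finset.union_subset hBE hWE)

/-- If `G` is a connected `1`-well-covered graph with more than two
vertices and `α = α(G)`, then `2(α − k)·s_k ≤ (k+1)·s_{k+1}` for all `1 ≤ k < α`. -/
theorem stmt_7 {V : Type*} [Fintype V] (G : SimpleGraph V)
    (hconn : G.Connected) (hcard : 2 < Fintype.card V) (h1wc : IsOneWellCovered G)
    (alpha : ℕ) (ha : alpha = indepNum G)
    (k : ℕ) (hk1 : 1 ≤ k) (hk2 : k < alpha) :
    2 * ((alpha : ℤ) - k) * indepCount G k ≤ ((k : ℤ) + 1) * indepCount G (k + 1) := by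
  subst ha
  set Ik := Finset.univ.filter fun S : Finset V => IsIndepSet G S ∧ S.card = k with hIk
  set Ik1 := Finset.univ.filter fun S : Finset V => IsIndepSet G S ∧ S.card = k + 1
    with hIk1
  -- double counting
  have key : ∑ a ∈ Ik, (Ik1.filter fun b => a ⊆ b).card
      = ∑ b ∈ Ik1, (Ik.filter fun a => a ⊆ b).card := by
    simp_rw [Finset.card_filter]
    exact Finset.sum_comm
  -- right side: each (k+1)-set contains exactly k+1 k-subsets
  have hright : ∀ b ∈ Ik1, (Ik.filter fun a => a ⊆ b).card = k + 1 := by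
    intro b hb
    rw [hIk1, Finset.mem_filter] at hb
    have : (Ik.filter fun a => a ⊆ b) = Finset.powersetCard k b := by
      ext a
      rw [Finset.mem_filter, hIk, Finset.mem_filter, Finset.mem_powersetCard]
      constructor
      · rintro ⟨⟨_, _, hc⟩, hs⟩; exact ⟨hs, hc⟩
      · rintro ⟨hs, hc⟩
        exact ⟨⟨Finset.mem_univ _, indep_subset hb.2.1 hs, hc⟩, hs⟩
    rw [this, Finset.card_powersetCard, hb.2.2, Nat.choose_succ_self_right]
  -- left side: each k-set extends in at least 2(α-k) ways
  have hleft : ∀ a ∈ Ik, 2 * (indepNum G - k) ≤ (Ik1.filter fun b => a ⊆ b).card := by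
    intro a haI
    rw [hIk, Finset.mem_filter] at haI
    set E := Finset.univ.filter fun w => w ∉ a ∧ IsIndepSet G (insert w a) with hEdef
    have himg : E.image (fun w => insert w a) = Ik1.filter fun b => a ⊆ b := by
      ext b
      constructor
      · intro hb
        obtain ⟨w, hw, rfl⟩ := Finset.mem_image.1 hb
        rw [hEdef, Finset.mem_filter] at hw
        rw [Finset.mem_filter, hIk1, Finset.mem_filter]
        exact ⟨⟨Finset.mem_univ _, hw.2.2, by
          rw [Finset.card_insert_of_notMem hw.2.1, haI.2.2]⟩,
          Finset.subset_insert _ _⟩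
      · intro hb
        rw [Finset.mem_filter, hIk1, Finset.mem_filter] at hb
        obtain ⟨⟨_, hbind, hbcard⟩, hab⟩ := hb
        have hone : (b \ a).card = 1 := by
          rw [Finset.card_sdiff_of_subset hab, hbcard, haI.2.2]; omega
        obtain ⟨w, hw⟩ := Finset.card_eq_one.1 hone
        have hwmem : w ∈ b ∧ w ∉ a :=
          Finset.mem_sdiff.1 (hw ▸ Finset.mem_singleton_self w)
        have hbeq : b = insert w a := by
          have h1 : a ∪ b \ a = b := Finset.union_sdiff_of_subset hab
          rw [hw] at h1
          rw [← h1]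
          ext x
          simp [Finset.mem_union, Finset.mem_insert, or_comm]
        refine Finset.mem_image.2 ⟨w, ?_, hbeq.symm⟩
        rw [hEdef, Finset.mem_filter]
        exact ⟨Finset.mem_univ _, hwmem.2, hbeq ▸ hbind⟩
    have hinj : Set.InjOn (fun w => insert w a) E := by
      intro x hx y hy hxy
      have hxE : x ∉ a := (Finset.mem_filter.1 (Finset.mem_coe.1 hx)).2.1
      have hyE : y ∉ a := (Finset.mem_filter.1 (Finset.mem_coe.1 hy)).2.1
      simp only at hxy
      have : x ∈ insert y a := hxy ▸ Finset.mem_insert_self x a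
      rcases Finset.mem_insert.1 this with h | h
      · exact h
      · exact absurd h hxE
    have hcard2 : (Ik1.filter fun b => a ⊆ b).card = E.card := by
      rw [← himg, Finset.card_image_of_injOn hinj]
    rw [hcard2, ← haI.2.2]
    exact two_mul_le_ext_card hconn h1wc haI.2.1
  -- combine
  have hsum1 : ∑ b ∈ Ik1, (Ik.filter fun a => a ⊆ b).card = (k + 1) * Ik1.card := by
    rw [Finset.sum_congr rfl hright, Finset.sum_const, smul_eq_mul, mul_comm]
  have hsum2 : 2 * (indepNum G - k) * Ik.card
      ≤ ∑ a ∈ Ik, (Ik1.filter fun b => a ⊆ b).card := by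
    calc 2 * (indepNum G - k) * Ik.card = ∑ _a ∈ Ik, 2 * (indepNum G - k) := by
          rw [Finset.sum_const, smul_eq_mul, mul_comm]
    _ ≤ _ := Finset.sum_le_sum hleft
  have hnat : 2 * (indepNum G - k) * Ik.card ≤ (k + 1) * Ik1.card := by
    omega
  have hIkc : indepCount G k = Ik.card := rfl
  have hIk1c : indepCount G (k + 1) = Ik1.card := rfl
  rw [hIkc, hIk1c]
  have hcast : ((indepNum G : ℤ) - k) = ((indepNum G - k : ℕ) : ℤ) := by
    rw [Nat.cast_sub hk2.le]
  rw [hcast]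
  push_cast
  exact_mod_cast hnat
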